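/- Let ρ : ℝ^d → ℝ be convex, positively homogeneous of degree one, and satisfy the monotonicity property (for q, r ∈ ℝ^d: if for each coordinate j either 0 ≤ r_j ≤ q_j or (q_j ≤ r_j and r_j = 0), then ρ(r) ≤ ρ(q)); let 𝒫 be its dual set. Let K ⊂ ℝ^d be a nonempty compact convex set and q_0 ∈ ℝ^d such that every q ∈ K satisfies q ≥ q_0 componentwise, and define H(z) = min{z·q : q ∈ K}. Then: (i) for every p ∈ ℝ^d, H(p₊) − p₊·q_0 ≥ H(p) − p·q_0, where p₊ is the componentwise positive part of p; and (ii) consequently, if z* maximizes H(z) − z·q_0 over 𝒫, then z*₊ ∈ 𝒫 is also a maximizer, so there exists a componentwise nonnegative optimal price. -/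

import Mathlib

open scoped RealInnerProductSpace

lemma euclid_inner_eq {d : ℕ} (x y : EuclideanSpace ℝ (Fin d)) :
    ⟪x, y⟫ = ∑ j, x j * y j := by
  simp [PiLp.inner_apply, RCLike.inner_apply, mul_comm]

/-- nonnegative optimal prices: with `ρ` convex, positively
one-homogeneous and coordinatewise monotone, `𝒫` its dual set, `K` nonempty compact convex
with `q ≥ q₀` componentwise for every `q ∈ K`, and `H(z) = min{z·q : q ∈ K}`:
(i) for every `p`, `H(p₊) − p₊·q₀ ≥ H(p) − p·q₀`; and (ii) if `z*` maximizes `H(z) − z·q₀`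
over `𝒫`, then `z*₊ ∈ 𝒫` is also a maximizer. -/
theorem nonnegative_optimal_prices (d : ℕ) (ρ : EuclideanSpace ℝ (Fin d) → ℝ)
    (hconv : ConvexOn ℝ Set.univ ρ)
    (hhom : ∀ α : ℝ, 0 ≤ α → ∀ q, ρ (α • q) = α * ρ q)
    (hmono : ∀ q r : EuclideanSpace ℝ (Fin d),
      (∀ j, (0 ≤ r j ∧ r j ≤ q j) ∨ (q j ≤ r j ∧ r j = 0)) → ρ r ≤ ρ q)
    (K : Set (EuclideanSpace ℝ (Fin d))) (hKne : K.Nonempty) (hKc : IsCompact K)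
    (hKconv : Convex ℝ K) (q₀ : EuclideanSpace ℝ (Fin d))
    (hdom : ∀ q ∈ K, ∀ j, q₀ j ≤ q j)
    (H : EuclideanSpace ℝ (Fin d) → ℝ)
    (hH : ∀ z, H z = sInf ((fun q => ⟪z, q⟫) '' K))
    (P : Set (EuclideanSpace ℝ (Fin d)))
    (hP : P = {z : EuclideanSpace ℝ (Fin d) | ∀ q, ⟪z, q⟫ ≤ ρ q})
    (pos : EuclideanSpace ℝ (Fin d) → EuclideanSpace ℝ (Fin d))
    (hpos : ∀ p j, pos p j = max (p j) 0) :
    (∀ p : EuclideanSpace ℝ (Fin d),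
        H p - ⟪p, q₀⟫ ≤ H (pos p) - ⟪pos p, q₀⟫) ∧
    (∀ zstar ∈ P, (∀ z ∈ P, H z - ⟪z, q₀⟫ ≤ H zstar - ⟪zstar, q₀⟫) →
        pos zstar ∈ P ∧
        ∀ z ∈ P, H z - ⟪z, q₀⟫ ≤ H (pos zstar) - ⟪pos zstar, q₀⟫) := by
  have hbdd : ∀ z : EuclideanSpace ℝ (Fin d), BddBelow ((fun q => ⟪z, q⟫) '' K) := by
    intro z
    exact ((hKc.image (continuous_const.inner continuous_id)).bddBelow)
  have hHle : ∀ z, ∀ q ∈ K, H z ≤ ⟪z, q⟫ := by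
    intro z q hq
    rw [hH]
    exact csInf_le (hbdd z) ⟨q, hq, rfl⟩
  have part1 : ∀ p : EuclideanSpace ℝ (Fin d),
      H p - ⟪p, q₀⟫ ≤ H (pos p) - ⟪pos p, q₀⟫ := by
    intro p
    have key : H p - ⟪p, q₀⟫ + ⟪pos p, q₀⟫ ≤ H (pos p) := by
      rw [hH (pos p)]
      apply le_csInf (hKne.image _)
      rintro x ⟨q, hq, rfl⟩
      have h1 : ⟪p, q⟫ - ⟪p, q₀⟫ ≤ ⟪pos p, q⟫ - ⟪pos p, q₀⟫ := by
        rw [← inner_sub_right, ← inner_sub_right, euclid_inner_eq, euclid_inner_eq]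
        apply Finset.sum_le_sum
        intro j _
        have hqj : 0 ≤ (q - q₀) j := by
          have := hdom q hq j
          simp only [PiLp.sub_apply]
          linarith
        rw [hpos]
        exact mul_le_mul_of_nonneg_right (le_max_left _ _) hqj
      have h2 := hHle p q hq
      linarith
    linarith
  refine ⟨part1, ?_⟩
  intro zstar hzP hzmax
  have hposP : pos zstar ∈ P := by
    rw [hP] at hzP ⊢
    intro q
    set r : EuclideanSpace ℝ (Fin d) :=
      WithLp.toLp 2 (fun j => if 0 < zstar j then max (q j) 0 else 0) with hr
    have hrj : ∀ j, r j = if 0 < zstar j then max (q j) 0 else 0 := fun j => rfl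
    have step1 : ⟪pos zstar, q⟫ ≤ ⟪zstar, r⟫ := by
      rw [euclid_inner_eq, euclid_inner_eq]
      apply Finset.sum_le_sum
      intro j _
      rw [hpos, hrj]
      by_cases h : 0 < zstar j
      · simp only [h, if_pos]
        rw [max_eq_left h.le]
        exact mul_le_mul_of_nonneg_left (le_max_left _ _) h.le
      · simp only [h, if_neg, mul_zero]
        rw [max_eq_right (not_lt.mp h)]
        simp
    have step2 : ⟪zstar, r⟫ ≤ ρ r := hzP r
    have step3 : ρ r ≤ ρ q := by
      apply hmono
      intro j
      rw [hrj]
      by_cases hz : 0 < zstar j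
      · simp only [hz, if_pos]
        rcases le_or_gt 0 (q j) with hq | hq
        · left; exact ⟨le_max_right _ _, by rw [max_eq_left hq]⟩
        · right; rw [max_eq_right hq.le]; exact ⟨hq.le, rfl⟩
      · simp only [hz, if_neg]
        rcases le_or_gt 0 (q j) with hq | hq
        · left; exact ⟨le_refl 0, hq⟩
        · right; exact ⟨hq.le, rfl⟩
    linarith
  refine ⟨hposP, fun z hz => ?_⟩
  exact le_trans (hzmax z hz) (part1 zstar)
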